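/- Suppose the elastic product ep with parameters α, β, ξ=0 and functions f, g (g strictly positive) is an inner product on (U*, ⊕, ⊗). Then f, extended by f(0_S,0_S)=0, is an inner product on S: it is symmetric, linear in each argument, and positive-definite. -/

import Mathlib

noncomputable section

/-- A discrete time series is represented as a list of (timestamp, value) pairs,
stored in strictly *decreasing* timestamp order (head = last sample).
`IsTS` says timestamps strictly decrease along the list and no spatial value is zero,
i.e. the list represents an element of `U*` (the empty list being `Ω`). -/
def IsTS {S : Type*} [Zero S] (l : List (ℝ × S)) : Prop :=
  l.Chain' (fun x y => y.1 < x.1) ∧ ∀ p ∈ l, p.2 ≠ (0 : S)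

/-- The recursive elastic product with parameters `α β ξ` and functions `f`, `g`:
`ep(A₁ᵖ,B₁ᵠ) = α·ep(A₁ᵖ⁻¹,B₁ᵠ) + β·ep(A₁ᵖ⁻¹,B₁ᵠ⁻¹) + f(a(p),b(q))·g(t_{a(p)},t_{b(q)}) + α·ep(A₁ᵖ,B₁ᵠ⁻¹)`
with base case `ep(A,Ω) = ep(Ω,B) = ξ`. -/
def ep {S : Type*} (f : S → S → ℝ) (g : ℝ → ℝ → ℝ) (α β ξ : ℝ) :
    List (ℝ × S) → List (ℝ × S) → ℝ
  | [], _ => ξ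
  | _ :: _, [] => ξ
  | (t, a) :: A, (u, b) :: B =>
      α * ep f g α β ξ A ((u, b) :: B) + β * ep f g α β ξ A B
        + f a b * g t u + α * ep f g α β ξ ((t, a) :: A) B
  termination_by A B => A.length + B.length


open Classical in
/-- The timestamp-merging addition `⊕`: merge the two series by timestamps, adding the
spatial values at coinciding timestamps and deleting resulting zero values. -/
def tsAdd {S : Type*} [AddCommGroup S] :
    List (ℝ × S) → List (ℝ × S) → List (ℝ × S)
  | [], l => l
  | l, [] => l
  | (t, a) :: A, (u, b) :: B =>
      if u < t then (t, a) :: tsAdd A ((u, b) :: B)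
      else if t < u then (u, b) :: tsAdd ((t, a) :: A) B
      else if a + b = 0 then tsAdd A B
      else (t, a + b) :: tsAdd A B
  termination_by A B => A.length + B.length


open Classical in
/-- Scalar multiplication `⊗`: scale every spatial value, deleting everything if `λ = 0`. -/
def tsSmul {S : Type*} [AddCommGroup S] [Module ℝ S] (r : ℝ) (l : List (ℝ × S)) :
    List (ℝ × S) :=
  if r = 0 then [] else l.map fun p => (p.1, r • p.2)

/-- `ip` is an inner product on `(U*, ⊕, ⊗)`: symmetric, bilinear
(linearity in the first argument together with symmetry), and positive definite. -/
structure IsInnerOnTS {S : Type*} [AddCommGroup S] [Module ℝ S]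
    (ip : List (ℝ × S) → List (ℝ × S) → ℝ) : Prop where
  symm : ∀ A B, IsTS A → IsTS B → ip A B = ip B A
  add_left : ∀ A B C, IsTS A → IsTS B → IsTS C → ip (tsAdd A B) C = ip A C + ip B C
  smul_left : ∀ (r : ℝ) A B, IsTS A → IsTS B → ip (tsSmul r A) B = r * ip A B
  nonneg : ∀ A, IsTS A → 0 ≤ ip A A
  definite : ∀ A, IsTS A → (ip A A = 0 ↔ A = [])


/-- if the elastic product with `ξ = 0` is an inner product on `(U*, ⊕, ⊗)`,
then `f`, extended by `f(0,0) = 0`, is an inner product on `S`: symmetric, linear in each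
argument (by symmetry, linearity in the first suffices), and positive-definite. -/
theorem ep_inner_implies_f_inner
    {S : Type*} [AddCommGroup S] [Module ℝ S] (hS : ∃ s : S, s ≠ 0)
    (f : S → S → ℝ) (g : ℝ → ℝ → ℝ) (hg : ∀ t u, 0 < g t u)
    (α β : ℝ)
    (hip : IsInnerOnTS (ep f g α β 0)) :
    ∃ F : S → S → ℝ,
      (∀ a b : S, a ≠ 0 → b ≠ 0 → F a b = f a b) ∧
      F 0 0 = 0 ∧
      (∀ a b, F a b = F b a) ∧
      (∀ a b c, F (a + b) c = F a c + F b c) ∧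
      (∀ (r : ℝ) (a b : S), F (r • a) b = r * F a b) ∧
      (∀ a, 0 ≤ F a a) ∧
      (∀ a, F a a = 0 ↔ a = 0) := by
  classical
  set e := ep f g α β 0 with he
  -- embed S into time series
  set toTS : S → List (ℝ × S) := fun a => if a = 0 then [] else [(0, a)] with hto
  have hTS : ∀ a : S, IsTS (toTS a) := by
    intro a
    by_cases h : a = 0 <;> simp [hto, h, IsTS, List.Chain']
  have hadd : ∀ a b : S, toTS (a + b) = tsAdd (toTS a) (toTS b) := by
    intro a b
    by_cases ha : a = 0
    · subst ha; by_cases hb : b = 0 <;> simp [hto, hb, tsAdd]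
    · by_cases hb : b = 0
      · subst hb; simp [hto, ha, tsAdd]
      · by_cases hab : a + b = 0 <;> simp [hto, ha, hb, hab, tsAdd]
  have hsmul : ∀ (r : ℝ) (a : S), toTS (r • a) = tsSmul r (toTS a) := by
    intro r a
    by_cases hr : r = 0
    · simp [hto, hr, tsSmul]
    · by_cases ha : a = 0
      · simp [hto, ha, tsSmul, hr]
      · have : r • a ≠ 0 := by
          simp [smul_eq_zero, hr, ha]
        simp [hto, ha, this, tsSmul, hr]
  have hg0 : g 0 0 ≠ 0 := ne_of_gt (hg 0 0)
  refine ⟨fun a b => e (toTS a) (toTS b) / g 0 0, ?_, ?_, ?_, ?_, ?_, ?_, ?_⟩ <;> dsimp only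
  · intro a b ha hb
    have : e (toTS a) (toTS b) = f a b * g 0 0 := by
      simp [hto, ha, hb, he, ep]
    rw [this, mul_div_cancel_right₀ _ hg0]
  · simp [hto, he, ep]
  · intro a b
    rw [hip.symm _ _ (hTS a) (hTS b)]
  · intro a b c
    rw [hadd, hip.add_left _ _ _ (hTS a) (hTS b) (hTS c), add_div]
  · intro r a b
    rw [hsmul, hip.smul_left _ _ _ (hTS a) (hTS b), mul_div_assoc]
  · intro a
    exact div_nonneg (hip.nonneg _ (hTS a)) (le_of_lt (hg 0 0))
  · intro a
    rw [div_eq_zero_iff]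
    simp only [hg0, or_false]
    rw [hip.definite _ (hTS a)]
    by_cases ha : a = 0 <;> simp [hto, ha]

end
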